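/- Let X be a topological space and E ⊆ X. The smallest family of subsets of X containing E and closed under topological closure, interior, binary intersection, and binary union has at most 35 elements. -/
import Mathlib

set_option maxRecDepth 100000

namespace Kur35

inductive LE7 where
  | var : Fin 7 → LE7
  | and : LE7 → LE7 → LE7
  | or : LE7 → LE7 → LE7

def terms : Fin 35 → LE7 := ![(.var 0), (.var 1), (.var 2), (.var 3), (.var 4), (.and (.var 0) (.var 3)), (.or (.var 0) (.var 3)), (.and (.var 0) (.var 4)), (.or (.var 0) (.var 4)), (.and (.var 3) (.var 4)), (.or (.var 3) (.var 4)), (.var 5), (.var 6), (.and (.var 0) (.and (.var 3) (.var 4))), (.or (.var 0) (.and (.var 3) (.var 4))), (.and (.var 0) (.or (.var 3) (.var 4))), (.or (.var 0) (.or (.var 3) (.var 4))), (.and (.var 0) (.var 5)), (.or (.var 0) (.var 5)), (.and (.var 0) (.var 6)), (.or (.var 0) (.var 6)), (.or (.var 3) (.and (.var 0) (.var 4))), (.and (.var 3) (.or (.var 0) (.var 4))), (.or (.var 4) (.and (.var 0) (.var 3))), (.and (.var 4) (.or (.var 0) (.var 3))), (.or (.and (.var 0) (.var 3)) (.var 6)),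 (.and (.or (.var 0) (.var 3)) (.var 5)), (.or (.and (.var 0) (.var 4)) (.var 6)), (.and (.or (.var 0) (.var 4)) (.var 5)), (.and (.var 3) (.or (.and (.var 0) (.var 4)) (.var 6))), (.or (.var 3) (.and (.or (.var 0) (.var 4)) (.var 5))), (.or (.and (.var 0) (.var 3)) (.and (.var 4) (.or (.var 0) (.var 3)))), (.or (.and (.var 0) (.var 3)) (.or (.and (.var 0) (.var 4)) (.var 6))), (.and (.or (.var 0) (.var 3)) (.and (.or (.var 0) (.var 4)) (.var 5))), (.and (.var 5) (.or (.var 0) (.var 6)))]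

def kT : Fin 35 → Fin 35 := ![1, 1, 4, 11, 4, 11, 1, 4, 1, 4, 11, 11, 4, 4, 1, 11, 1, 11, 1, 4, 1, 11, 11, 11, 4, 11, 11, 4, 11, 4, 11, 11, 11, 11, 11]
def iT : Fin 35 → Fin 35 := ![2, 3, 2, 3, 12, 2, 3, 2, 12, 12, 3, 3, 12, 2, 12, 2, 3, 2, 3, 2, 12, 3, 12, 12, 12, 12, 3, 12, 12, 12, 3, 12, 12, 12, 12]
def aT : Fin 35 → Fin 35 → Fin 35 := ![
  ![0, 0, 2, 5, 7, 5, 0, 7, 0, 13, 15, 17, 19, 13, 0, 15, 0, 17, 0, 19, 0, 15, 5, 15, 7, 5, 17, 7, 17, 13, 17, 15, 15, 17, 17],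
  ![0, 1, 2, 3, 4, 5, 6, 7, 8, 9, 10, 11, 12, 13, 14, 15, 16, 17, 18, 19, 20, 21, 22, 23, 24, 25, 26, 27, 28, 29, 30, 31, 32, 33, 34],
  ![2, 2, 2, 2, 2, 2, 2, 2, 2, 2, 2, 2, 2, 2, 2, 2, 2, 2, 2, 2, 2, 2, 2, 2, 2, 2, 2, 2, 2, 2, 2, 2, 2, 2, 2],
  ![5, 3, 2, 3, 9, 5, 3, 13, 22, 9, 3, 3, 12, 13, 22, 5, 3, 5, 3, 19, 25, 3, 22, 22, 9, 25, 3, 29, 22, 29, 3, 22, 25, 22, 25],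
  ![7, 4, 2, 9, 4, 13, 24, 7, 4, 9, 4, 4, 12, 13, 24, 7, 4, 7, 4, 19, 27, 24, 9, 4, 24, 29, 24, 27, 4, 29, 4, 24, 27, 24, 27],
  ![5, 5, 2, 5, 13, 5, 5, 13, 5, 13, 5, 5, 19, 13, 5, 5, 5, 5, 5, 19, 5, 5, 5, 5, 13, 5, 5, 13, 5, 13, 5, 5, 5, 5, 5],
  ![0, 6, 2, 3, 24, 5, 6, 7, 14, 9, 21, 26, 12, 13, 14, 15, 6, 17, 6, 19, 20, 21, 22, 31, 24, 25, 26, 27, 33, 29, 26, 31, 32, 33, 34],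
  ![7, 7, 2, 13, 7, 13, 7, 7, 7, 13, 7, 7, 19, 13, 7, 7, 7, 7, 7, 19, 7, 7, 13, 7, 7, 13, 7, 7, 7, 13, 7, 7, 7, 7, 7],
  ![0, 8, 2, 22, 4, 5, 14, 7, 8, 9, 23, 28, 12, 13, 14, 15, 8, 17, 8, 19, 20, 31, 22, 23, 24, 25, 33, 27, 28, 29, 28, 31, 32, 33, 34],
  ![13, 9, 2, 9, 9, 13, 9, 13, 9, 9, 9, 9, 12, 13, 9, 13, 9, 13, 9, 19, 29, 9, 9, 9, 9, 29, 9, 29, 9, 29, 9, 9, 29, 9, 29],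
  ![15, 10, 2, 3, 4, 5, 21, 7, 23, 9, 10, 10, 12, 13, 31, 15, 10, 15, 10, 19, 32, 21, 22, 23, 24, 25, 21, 27, 23, 29, 10, 31, 32, 31, 32],
  ![17, 11, 2, 3, 4, 5, 26, 7, 28, 9, 10, 11, 12, 13, 33, 15, 30, 17, 11, 19, 34, 21, 22, 23, 24, 25, 26, 27, 28, 29, 30, 31, 32, 33, 34],
  ![19, 12, 2, 12, 12, 19, 12, 19, 12, 12, 12, 12, 12, 19, 12, 19, 12, 19, 12, 19, 12, 12, 12, 12, 12, 12, 12, 12, 12, 12, 12, 12, 12, 12, 12],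
  ![13, 13, 2, 13, 13, 13, 13, 13, 13, 13, 13, 13, 19, 13, 13, 13, 13, 13, 13, 19, 13, 13, 13, 13, 13, 13, 13, 13, 13, 13, 13, 13, 13, 13, 13],
  ![0, 14, 2, 22, 24, 5, 14, 7, 14, 9, 31, 33, 12, 13, 14, 15, 14, 17, 14, 19, 20, 31, 22, 31, 24, 25, 33, 27, 33, 29, 33, 31, 32, 33, 34],
  ![15, 15, 2, 5, 7, 5, 15, 7, 15, 13, 15, 15, 19, 13, 15, 15, 15, 15, 15, 19, 15, 15, 5, 15, 7, 5, 15, 7, 15, 13, 15, 15, 15, 15, 15],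
  ![0, 16, 2, 3, 4, 5, 6, 7, 8, 9, 10, 30, 12, 13, 14, 15, 16, 17, 16, 19, 20, 21, 22, 23, 24, 25, 26, 27, 28, 29, 30, 31, 32, 33, 34],
  ![17, 17, 2, 5, 7, 5, 17, 7, 17, 13, 15, 17, 19, 13, 17, 15, 17, 17, 17, 19, 17, 15, 5, 15, 7, 5, 17, 7, 17, 13, 17, 15, 15, 17, 17],
  ![0, 18, 2, 3, 4, 5, 6, 7, 8, 9, 10, 11, 12, 13, 14, 15, 16, 17, 18, 19, 20, 21, 22, 23, 24, 25, 26, 27, 28, 29, 30, 31, 32, 33, 34],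
  ![19, 19, 2, 19, 19, 19, 19, 19, 19, 19, 19, 19, 19, 19, 19, 19, 19, 19, 19, 19, 19, 19, 19, 19, 19, 19, 19, 19, 19, 19, 19, 19, 19, 19, 19],
  ![0, 20, 2, 25, 27, 5, 20, 7, 20, 29, 32, 34, 12, 13, 20, 15, 20, 17, 20, 19, 20, 32, 25, 32, 27, 25, 34, 27, 34, 29, 34, 32, 32, 34, 34],
  ![15, 21, 2, 3, 24, 5, 21, 7, 31, 9, 21, 21, 12, 13, 31, 15, 21, 15, 21, 19, 32, 21, 22, 31, 24, 25, 21, 27, 31, 29, 21, 31, 32, 31, 32],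
  ![5, 22, 2, 22, 9, 5, 22, 13, 22, 9, 22, 22, 12, 13, 22, 5, 22, 5, 22, 19, 25, 22, 22, 22, 9, 25, 22, 29, 22, 29, 22, 22, 25, 22, 25],
  ![15, 23, 2, 22, 4, 5, 31, 7, 23, 9, 23, 23, 12, 13, 31, 15, 23, 15, 23, 19, 32, 31, 22, 23, 24, 25, 31, 27, 23, 29, 23, 31, 32, 31, 32],
  ![7, 24, 2, 9, 24, 13, 24, 7, 24, 9, 24, 24, 12, 13, 24, 7, 24, 7, 24, 19, 27, 24, 9, 24, 24, 29, 24, 27, 24, 29, 24, 24, 27, 24, 27],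
  ![5, 25, 2, 25, 29, 5, 25, 13, 25, 29, 25, 25, 12, 13, 25, 5, 25, 5, 25, 19, 25, 25, 25, 25, 29, 25, 25, 29, 25, 29, 25, 25, 25, 25, 25],
  ![17, 26, 2, 3, 24, 5, 26, 7, 33, 9, 21, 26, 12, 13, 33, 15, 26, 17, 26, 19, 34, 21, 22, 31, 24, 25, 26, 27, 33, 29, 26, 31, 32, 33, 34],
  ![7, 27, 2, 29, 27, 13, 27, 7, 27, 29, 27, 27, 12, 13, 27, 7, 27, 7, 27, 19, 27, 27, 29, 27, 27, 29, 27, 27, 27, 29, 27, 27, 27, 27, 27],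
  ![17, 28, 2, 22, 4, 5, 33, 7, 28, 9, 23, 28, 12, 13, 33, 15, 28, 17, 28, 19, 34, 31, 22, 23, 24, 25, 33, 27, 28, 29, 28, 31, 32, 33, 34],
  ![13, 29, 2, 29, 29, 13, 29, 13, 29, 29, 29, 29, 12, 13, 29, 13, 29, 13, 29, 19, 29, 29, 29, 29, 29, 29, 29, 29, 29, 29, 29, 29, 29, 29, 29],
  ![17, 30, 2, 3, 4, 5, 26, 7, 28, 9, 10, 30, 12, 13, 33, 15, 30, 17, 30, 19, 34, 21, 22, 23, 24, 25, 26, 27, 28, 29, 30, 31, 32, 33, 34],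
  ![15, 31, 2, 22, 24, 5, 31, 7, 31, 9, 31, 31, 12, 13, 31, 15, 31, 15, 31, 19, 32, 31, 22, 31, 24, 25, 31, 27, 31, 29, 31, 31, 32, 31, 32],
  ![15, 32, 2, 25, 27, 5, 32, 7, 32, 29, 32, 32, 12, 13, 32, 15, 32, 15, 32, 19, 32, 32, 25, 32, 27, 25, 32, 27, 32, 29, 32, 32, 32, 32, 32],
  ![17, 33, 2, 22, 24, 5, 33, 7, 33, 9, 31, 33, 12, 13, 33, 15, 33, 17, 33, 19, 34, 31, 22, 31, 24, 25, 33, 27, 33, 29, 33, 31, 32, 33, 34],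
  ![17, 34, 2, 25, 27, 5, 34, 7, 34, 29, 32, 34, 12, 13, 34, 15, 34, 17, 34, 19, 34, 32, 25, 32, 27, 25, 34, 27, 34, 29, 34, 32, 32, 34, 34]]
def oT : Fin 35 → Fin 35 → Fin 35 := ![
  ![0, 1, 0, 6, 8, 0, 6, 0, 8, 14, 16, 18, 20, 0, 14, 0, 16, 0, 18, 0, 20, 6, 14, 8, 14, 20, 6, 20, 8, 20, 16, 14, 20, 14, 20],
  ![1, 1, 1, 1, 1, 1, 1, 1, 1, 1, 1, 1, 1, 1, 1, 1, 1, 1, 1, 1, 1, 1, 1, 1, 1, 1, 1, 1, 1, 1, 1, 1, 1, 1, 1],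
  ![0, 1, 2, 3, 4, 5, 6, 7, 8, 9, 10, 11, 12, 13, 14, 15, 16, 17, 18, 19, 20, 21, 22, 23, 24, 25, 26, 27, 28, 29, 30, 31, 32, 33, 34],
  ![6, 1, 3, 3, 10, 3, 6, 21, 16, 3, 10, 11, 3, 3, 6, 21, 16, 26, 18, 3, 6, 21, 3, 10, 21, 3, 26, 21, 30, 3, 30, 21, 21, 26, 26],
  ![8, 1, 4, 10, 4, 23, 16, 4, 8, 4, 10, 11, 4, 4, 8, 23, 16, 28, 18, 4, 8, 10, 23, 23, 4, 23, 30, 4, 28, 4, 30, 23, 23, 28, 28],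
  ![0, 1, 5, 3, 23, 5, 6, 15, 8, 22, 10, 11, 25, 5, 14, 15, 16, 17, 18, 5, 20, 21, 22, 23, 31, 25, 26, 32, 28, 25, 30, 31, 32, 33, 34],
  ![6, 1, 6, 6, 16, 6, 6, 6, 16, 6, 16, 18, 6, 6, 6, 6, 16, 6, 18, 6, 6, 6, 6, 16, 6, 6, 6, 6, 16, 6, 16, 6, 6, 6, 6],
  ![0, 1, 7, 21, 4, 15, 6, 7, 8, 24, 10, 11, 27, 7, 14, 15, 16, 17, 18, 7, 20, 21, 31, 23, 24, 32, 26, 27, 28, 27, 30, 31, 32, 33, 34],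
  ![8, 1, 8, 16, 8, 8, 16, 8, 8, 8, 16, 18, 8, 8, 8, 8, 16, 8, 18, 8, 8, 16, 8, 8, 8, 8, 16, 8, 8, 8, 16, 8, 8, 8, 8],
  ![14, 1, 9, 3, 4, 22, 6, 24, 8, 9, 10, 11, 9, 9, 14, 31, 16, 33, 18, 9, 14, 21, 22, 23, 24, 22, 26, 24, 28, 9, 30, 31, 31, 33, 33],
  ![16, 1, 10, 10, 10, 10, 16, 10, 16, 10, 10, 11, 10, 10, 16, 10, 16, 30, 18, 10, 16, 10, 10, 10, 10, 10, 30, 10, 30, 10, 30, 10, 10, 30, 30],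
  ![18, 1, 11, 11, 11, 11, 18, 11, 18, 11, 11, 11, 11, 11, 18, 11, 18, 11, 18, 11, 18, 11, 11, 11, 11, 11, 11, 11, 11, 11, 11, 11, 11, 11, 11],
  ![20, 1, 12, 3, 4, 25, 6, 27, 8, 9, 10, 11, 12, 29, 14, 32, 16, 34, 18, 12, 20, 21, 22, 23, 24, 25, 26, 27, 28, 29, 30, 31, 32, 33, 34],
  ![0, 1, 13, 3, 4, 5, 6, 7, 8, 9, 10, 11, 29, 13, 14, 15, 16, 17, 18, 13, 20, 21, 22, 23, 24, 25, 26, 27, 28, 29, 30, 31, 32, 33, 34],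
  ![14, 1, 14, 6, 8, 14, 6, 14, 8, 14, 16, 18, 14, 14, 14, 14, 16, 14, 18, 14, 14, 6, 14, 8, 14, 14, 6, 14, 8, 14, 16, 14, 14, 14, 14],
  ![0, 1, 15, 21, 23, 15, 6, 15, 8, 31, 10, 11, 32, 15, 14, 15, 16, 17, 18, 15, 20, 21, 31, 23, 31, 32, 26, 32, 28, 32, 30, 31, 32, 33, 34],
  ![16, 1, 16, 16, 16, 16, 16, 16, 16, 16, 16, 18, 16, 16, 16, 16, 16, 16, 18, 16, 16, 16, 16, 16, 16, 16, 16, 16, 16, 16, 16, 16, 16, 16, 16],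
  ![0, 1, 17, 26, 28, 17, 6, 17, 8, 33, 30, 11, 34, 17, 14, 17, 16, 17, 18, 17, 20, 26, 33, 28, 33, 34, 26, 34, 28, 34, 30, 33, 34, 33, 34],
  ![18, 1, 18, 18, 18, 18, 18, 18, 18, 18, 18, 18, 18, 18, 18, 18, 18, 18, 18, 18, 18, 18, 18, 18, 18, 18, 18, 18, 18, 18, 18, 18, 18, 18, 18],
  ![0, 1, 19, 3, 4, 5, 6, 7, 8, 9, 10, 11, 12, 13, 14, 15, 16, 17, 18, 19, 20, 21, 22, 23, 24, 25, 26, 27, 28, 29, 30, 31, 32, 33, 34],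
  ![20, 1, 20, 6, 8, 20, 6, 20, 8, 14, 16, 18, 20, 20, 14, 20, 16, 20, 18, 20, 20, 6, 14, 8, 14, 20, 6, 20, 8, 20, 16, 14, 20, 14, 20],
  ![6, 1, 21, 21, 10, 21, 6, 21, 16, 21, 10, 11, 21, 21, 6, 21, 16, 26, 18, 21, 6, 21, 21, 10, 21, 21, 26, 21, 30, 21, 30, 21, 21, 26, 26],
  ![14, 1, 22, 3, 23, 22, 6, 31, 8, 22, 10, 11, 22, 22, 14, 31, 16, 33, 18, 22, 14, 21, 22, 23, 31, 22, 26, 31, 28, 22, 30, 31, 31, 33, 33],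
  ![8, 1, 23, 10, 23, 23, 16, 23, 8, 23, 10, 11, 23, 23, 8, 23, 16, 28, 18, 23, 8, 10, 23, 23, 23, 23, 30, 23, 28, 23, 30, 23, 23, 28, 28],
  ![14, 1, 24, 21, 4, 31, 6, 24, 8, 24, 10, 11, 24, 24, 14, 31, 16, 33, 18, 24, 14, 21, 31, 23, 24, 31, 26, 24, 28, 24, 30, 31, 31, 33, 33],
  ![20, 1, 25, 3, 23, 25, 6, 32, 8, 22, 10, 11, 25, 25, 14, 32, 16, 34, 18, 25, 20, 21, 22, 23, 31, 25, 26, 32, 28, 25, 30, 31, 32, 33, 34],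
  ![6, 1, 26, 26, 30, 26, 6, 26, 16, 26, 30, 11, 26, 26, 6, 26, 16, 26, 18, 26, 6, 26, 26, 30, 26, 26, 26, 26, 30, 26, 30, 26, 26, 26, 26],
  ![20, 1, 27, 21, 4, 32, 6, 27, 8, 24, 10, 11, 27, 27, 14, 32, 16, 34, 18, 27, 20, 21, 31, 23, 24, 32, 26, 27, 28, 27, 30, 31, 32, 33, 34],
  ![8, 1, 28, 30, 28, 28, 16, 28, 8, 28, 30, 11, 28, 28, 8, 28, 16, 28, 18, 28, 8, 30, 28, 28, 28, 28, 30, 28, 28, 28, 30, 28, 28, 28, 28],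
  ![20, 1, 29, 3, 4, 25, 6, 27, 8, 9, 10, 11, 29, 29, 14, 32, 16, 34, 18, 29, 20, 21, 22, 23, 24, 25, 26, 27, 28, 29, 30, 31, 32, 33, 34],
  ![16, 1, 30, 30, 30, 30, 16, 30, 16, 30, 30, 11, 30, 30, 16, 30, 16, 30, 18, 30, 16, 30, 30, 30, 30, 30, 30, 30, 30, 30, 30, 30, 30, 30, 30],
  ![14, 1, 31, 21, 23, 31, 6, 31, 8, 31, 10, 11, 31, 31, 14, 31, 16, 33, 18, 31, 14, 21, 31, 23, 31, 31, 26, 31, 28, 31, 30, 31, 31, 33, 33],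
  ![20, 1, 32, 21, 23, 32, 6, 32, 8, 31, 10, 11, 32, 32, 14, 32, 16, 34, 18, 32, 20, 21, 31, 23, 31, 32, 26, 32, 28, 32, 30, 31, 32, 33, 34],
  ![14, 1, 33, 26, 28, 33, 6, 33, 8, 33, 30, 11, 33, 33, 14, 33, 16, 33, 18, 33, 14, 26, 33, 28, 33, 33, 26, 33, 28, 33, 30, 33, 33, 33, 33],
  ![20, 1, 34, 26, 28, 34, 6, 34, 8, 33, 30, 11, 34, 34, 14, 34, 16, 34, 18, 34, 20, 26, 33, 28, 33, 34, 26, 34, 28, 34, 30, 33, 34, 33, 34]]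
def TT : Fin 35 → ℕ := ![226854911280625642308916404954512140970, 272225893536750770770699685945414569164, 320265757102059730318470218759311257840, 338958311018522360492699998064329424640, 340277174703306882242637262502835978240, 225972207345681573661799998709552949760, 339841014953466429139816404309288615850, 226851449802204588161758175001890652160, 340280636181727936389795492455457467050, 338953139004072225113288479380256849920, 340282346717757017622048781186908552960, 340282366841710300967557013907638845440, 340282366920938463444927863358058659840, 225968759336048150075525652920171233280, 339839290948649717346679231414597757610, 226854897811838011748032520791272368640, 340282360186544648182932665350148325290, 226854911227806867311704675938425896960, 340282366894529075964768742923725089450, 226854911280625642296618575572039106560, 340282366920938463457225692740531694250, 339841001484678798578932520146048843520, 338956587013705648699562825169638566400, 340280622712940305828911608292217694720, 339835829470228663199521001461976268800, 340282366920938463457177841264335301120, 339841014874341026906639300530326732800, 340282366920938463457225505093410488320, 340280636102500176863102189116483174400, 338958311018522360486574822194214338560, 340282360186236368962984442379957763840, 339839277479862086785795347251357985280, 340282366920938463457225692010387253760, 339839290869524716514653171555479060480, 340282366841710300961408099217833984000]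
def ADM : ℕ := 186091919409888222207401070513103044621

def evalB (v : Fin 7 → Bool) : LE7 → Bool
  | .var i => v i
  | .and a b => evalB v a && evalB v b
  | .or a b => evalB v a || evalB v b

theorem masterAnd : ∀ a b : Fin 35, TT (aT a b) &&& ADM = TT a &&& TT b &&& ADM := by decide

theorem masterOr : ∀ a b : Fin 35, TT (oT a b) &&& ADM = (TT a ||| TT b) &&& ADM := by decide

theorem ttSpec : ∀ n : Fin 35, ∀ v : Fin 128,
    (TT n).testBit v.val = evalB (fun i => Nat.testBit v.val i.val) (terms n) := by decide

def enc (b0 b1 b2 b3 b4 b5 b6 : Bool) : ℕ :=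
  b0.toNat + 2*b1.toNat + 4*b2.toNat + 8*b3.toNat + 16*b4.toNat + 32*b5.toNat + 64*b6.toNat

theorem enc_lt (b0 b1 b2 b3 b4 b5 b6 : Bool) : enc b0 b1 b2 b3 b4 b5 b6 < 128 := by
  have h0 := Bool.toNat_le b0; have h1 := Bool.toNat_le b1; have h2 := Bool.toNat_le b2
  have h3 := Bool.toNat_le b3; have h4 := Bool.toNat_le b4; have h5 := Bool.toNat_le b5
  have h6 := Bool.toNat_le b6
  unfold enc; omega

theorem enc_testBit : ∀ (b0 b1 b2 b3 b4 b5 b6 : Bool) (i : Fin 7),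
    (enc b0 b1 b2 b3 b4 b5 b6).testBit i.val = ![b0, b1, b2, b3, b4, b5, b6] i := by decide

theorem adm_testBit : ∀ (b0 b1 b2 b3 b4 b5 b6 : Bool),
    ((!b2 || b0) && ((!b2 || b6) && ((!b6 || b3) && ((!b6 || b4) && ((!b3 || b5) &&
      ((!b4 || b5) && ((!b5 || b1) && (!b0 || b1)))))))) = true →
    ADM.testBit (enc b0 b1 b2 b3 b4 b5 b6) = true := by decide

variable {X : Type*} [TopologicalSpace X]

noncomputable def basics (E : Set X) : Fin 7 → Set X :=
  ![E, closure E, interior E, interior (closure E), closure (interior E),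
    closure (interior (closure E)), interior (closure (interior E))]

noncomputable def evalS (E : Set X) : LE7 → Set X
  | .var i => basics E i
  | .and a b => evalS E a ∩ evalS E b
  | .or a b => evalS E a ∪ evalS E b

noncomputable def vb (E : Set X) (x : X) : Fin 7 → Bool :=
  fun i => @decide (x ∈ basics E i) (Classical.propDecidable _)

theorem vb_iff (E : Set X) (x : X) (i : Fin 7) : vb E x i = true ↔ x ∈ basics E i := by
  unfold vb; exact @decide_eq_true_iff _ (Classical.propDecidable _)

theorem mem_evalS (E : Set X) (x : X) (e : LE7) :
    x ∈ evalS E e ↔ evalB (vb E x) e = true := by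
  induction e with
  | var i => simp [evalS, evalB, vb_iff]
  | and a b iha ihb => simp [evalS, evalB, iha, ihb]
  | or a b iha ihb => simp [evalS, evalB, iha, ihb]

theorem bool_imp {a b : Bool} (h : a = true → b = true) : (!a || b) = true := by
  cases a
  · rfl
  · simp [h rfl]

theorem adm_vb (E : Set X) (x : X) :
    ((!vb E x 2 || vb E x 0) && ((!vb E x 2 || vb E x 6) && ((!vb E x 6 || vb E x 3) &&
      ((!vb E x 6 || vb E x 4) && ((!vb E x 3 || vb E x 5) && ((!vb E x 4 || vb E x 5) &&
      ((!vb E x 5 || vb E x 1) && (!vb E x 0 || vb E x 1)))))))) = true := by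
  have r1 : (interior E : Set X) ⊆ E := interior_subset
  have r2 : (interior E : Set X) ⊆ interior (closure (interior E)) :=
    interior_maximal subset_closure isOpen_interior
  have r3 : (interior (closure (interior E)) : Set X) ⊆ interior (closure E) :=
    interior_mono (closure_mono interior_subset)
  have r4 : (interior (closure (interior E)) : Set X) ⊆ closure (interior E) := interior_subset
  have r5 : (interior (closure E) : Set X) ⊆ closure (interior (closure E)) := subset_closure
  have r6 : (closure (interior E) : Set X) ⊆ closure (interior (closure E)) :=
    closure_mono (interior_mono subset_closure)
  have r7 : (closure (interior (closure E)) : Set X) ⊆ closure E := by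
    have := closure_mono (interior_subset : interior (closure E) ⊆ closure E)
    rwa [closure_closure] at this
  have r8 : (E : Set X) ⊆ closure E := subset_closure
  simp only [Bool.and_eq_true]
  refine ⟨?_, ?_, ?_, ?_, ?_, ?_, ?_, ?_⟩
  · exact bool_imp fun h => (vb_iff E x 0).mpr (r1 ((vb_iff E x 2).mp h))
  · exact bool_imp fun h => (vb_iff E x 6).mpr (r2 ((vb_iff E x 2).mp h))
  · exact bool_imp fun h => (vb_iff E x 3).mpr (r3 ((vb_iff E x 6).mp h))
  · exact bool_imp fun h => (vb_iff E x 4).mpr (r4 ((vb_iff E x 6).mp h))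
  · exact bool_imp fun h => (vb_iff E x 5).mpr (r5 ((vb_iff E x 3).mp h))
  · exact bool_imp fun h => (vb_iff E x 5).mpr (r6 ((vb_iff E x 4).mp h))
  · exact bool_imp fun h => (vb_iff E x 1).mpr (r7 ((vb_iff E x 5).mp h))
  · exact bool_imp fun h => (vb_iff E x 1).mpr (r8 ((vb_iff E x 0).mp h))

theorem testBit_eval (E : Set X) (x : X) (n : Fin 35) :
    (TT n).testBit (enc (vb E x 0) (vb E x 1) (vb E x 2) (vb E x 3) (vb E x 4) (vb E x 5)
      (vb E x 6)) = evalB (vb E x) (terms n) := by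
  have hv : (fun i : Fin 7 => Nat.testBit ((⟨enc (vb E x 0) (vb E x 1) (vb E x 2) (vb E x 3)
      (vb E x 4) (vb E x 5) (vb E x 6), enc_lt _ _ _ _ _ _ _⟩ : Fin 128) : Fin 128).val i.val)
      = vb E x := by
    funext i
    rw [enc_testBit]
    fin_cases i <;> rfl
  have h := ttSpec n ⟨enc (vb E x 0) (vb E x 1) (vb E x 2) (vb E x 3) (vb E x 4) (vb E x 5)
      (vb E x 6), enc_lt _ _ _ _ _ _ _⟩
  rw [hv] at h
  exact h

theorem interEval (E : Set X) (a b : Fin 35) :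
    evalS E (terms (aT a b)) = evalS E (terms a) ∩ evalS E (terms b) := by
  ext x
  simp only [Set.mem_inter_iff, mem_evalS]
  have hADM : ADM.testBit (enc (vb E x 0) (vb E x 1) (vb E x 2) (vb E x 3) (vb E x 4)
      (vb E x 5) (vb E x 6)) = true := adm_testBit _ _ _ _ _ _ _ (adm_vb E x)
  have hm := congrArg (fun t => t.testBit (enc (vb E x 0) (vb E x 1) (vb E x 2) (vb E x 3)
      (vb E x 4) (vb E x 5) (vb E x 6))) (masterAnd a b)
  simp only [Nat.testBit_land, hADM, Bool.and_true, testBit_eval] at hm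
  rw [← Bool.and_eq_true]
  rw [← hm]

theorem orEval (E : Set X) (a b : Fin 35) :
    evalS E (terms (oT a b)) = evalS E (terms a) ∪ evalS E (terms b) := by
  ext x
  simp only [Set.mem_union, mem_evalS]
  have hADM : ADM.testBit (enc (vb E x 0) (vb E x 1) (vb E x 2) (vb E x 3) (vb E x 4)
      (vb E x 5) (vb E x 6)) = true := adm_testBit _ _ _ _ _ _ _ (adm_vb E x)
  have hm := congrArg (fun t => t.testBit (enc (vb E x 0) (vb E x 1) (vb E x 2) (vb E x 3)
      (vb E x 4) (vb E x 5) (vb E x 6))) (masterOr a b)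
  simp only [Nat.testBit_land, Nat.testBit_lor, hADM, Bool.and_true, testBit_eval] at hm
  rw [← Bool.or_eq_true]
  rw [← hm]

theorem subsetT (E : Set X) (a b : Fin 35) (h : aT a b = a) :
    evalS E (terms a) ⊆ evalS E (terms b) := by
  have h2 := interEval E a b
  rw [h] at h2
  intro x hx
  rw [h2] at hx
  exact hx.2

theorem csand {A B : Set X} (h1 : A ⊆ B) (h2 : B ⊆ closure A) : closure B = closure A := by
  refine subset_antisymm ?_ (closure_mono h1)
  have := closure_mono h2
  rwa [closure_closure] at this

theorem isand {A B : Set X} (h1 : interior A ⊆ B) (h2 : B ⊆ A) : interior B = interior A :=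
  subset_antisymm (interior_mono h2) (interior_maximal h1 isOpen_interior)

theorem kstep (E : Set X) (L n T : Fin 35)
    (hbase : closure (evalS E (terms L)) = evalS E (terms T))
    (h1 : evalS E (terms L) ⊆ evalS E (terms n))
    (h2 : evalS E (terms n) ⊆ evalS E (terms T)) :
    closure (evalS E (terms n)) = evalS E (terms T) := by
  rw [← hbase] at h2
  rw [csand h1 h2, hbase]

theorem istep (E : Set X) (T n U : Fin 35)
    (hbase : interior (evalS E (terms U)) = evalS E (terms T))
    (h1 : evalS E (terms T) ⊆ evalS E (terms n))
    (h2 : evalS E (terms n) ⊆ evalS E (terms U)) :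
    interior (evalS E (terms n)) = evalS E (terms T) := by
  rw [← hbase] at h1
  rw [isand h1 h2, hbase]

theorem keyK (A : Set X) :
    closure (A ∩ interior (closure A)) = closure (interior (closure A)) := by
  refine subset_antisymm (closure_mono Set.inter_subset_right) ?_
  have h : interior (closure A) ∩ closure A ⊆ closure (interior (closure A) ∩ A) :=
    isOpen_interior.inter_closure
  have h2 : interior (closure A) ⊆ closure (A ∩ interior (closure A)) := by
    intro y hy
    have := h ⟨hy, interior_subset hy⟩
    rwa [Set.inter_comm] at this
  have h3 := closure_mono h2
  rwa [closure_closure] at h3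

theorem keyI (E : Set X) :
    interior (E ∪ closure (interior E)) = interior (closure (interior E)) := by
  have h := keyK Eᶜ
  rw [closure_compl, interior_compl] at h
  rw [show Eᶜ ∩ (closure (interior E))ᶜ = (E ∪ closure (interior E))ᶜ by
    rw [Set.compl_union]] at h
  rw [closure_compl, closure_compl] at h
  exact compl_injective h

theorem baseK0 (E : Set X) : closure (evalS E (terms 0)) = evalS E (terms 1) := rfl

theorem baseK2 (E : Set X) : closure (evalS E (terms 2)) = evalS E (terms 4) := rfl

theorem baseK5 (E : Set X) : closure (evalS E (terms 5)) = evalS E (terms 11) := keyK E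

theorem baseI0 (E : Set X) : interior (evalS E (terms 0)) = evalS E (terms 2) := rfl

theorem baseI1 (E : Set X) : interior (evalS E (terms 1)) = evalS E (terms 3) := rfl

theorem baseI8 (E : Set X) : interior (evalS E (terms 8)) = evalS E (terms 12) := keyI E

theorem closureEval (E : Set X) (n : Fin 35) :
    closure (evalS E (terms n)) = evalS E (terms (kT n)) := by
  fin_cases n
  · exact kstep E 0 0 1 (baseK0 E) (subsetT E 0 0 (by decide)) (subsetT E 0 1 (by decide))
  · exact kstep E 0 1 1 (baseK0 E) (subsetT E 0 1 (by decide)) (subsetT E 1 1 (by decide))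
  · exact kstep E 2 2 4 (baseK2 E) (subsetT E 2 2 (by decide)) (subsetT E 2 4 (by decide))
  · exact kstep E 5 3 11 (baseK5 E) (subsetT E 5 3 (by decide)) (subsetT E 3 11 (by decide))
  · exact kstep E 2 4 4 (baseK2 E) (subsetT E 2 4 (by decide)) (subsetT E 4 4 (by decide))
  · exact kstep E 5 5 11 (baseK5 E) (subsetT E 5 5 (by decide)) (subsetT E 5 11 (by decide))
  · exact kstep E 0 6 1 (baseK0 E) (subsetT E 0 6 (by decide)) (subsetT E 6 1 (by decide))
  · exact kstep E 2 7 4 (baseK2 E) (subsetT E 2 7 (by decide)) (subsetT E 7 4 (by decide))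
  · exact kstep E 0 8 1 (baseK0 E) (subsetT E 0 8 (by decide)) (subsetT E 8 1 (by decide))
  · exact kstep E 2 9 4 (baseK2 E) (subsetT E 2 9 (by decide)) (subsetT E 9 4 (by decide))
  · exact kstep E 5 10 11 (baseK5 E) (subsetT E 5 10 (by decide)) (subsetT E 10 11 (by decide))
  · exact kstep E 5 11 11 (baseK5 E) (subsetT E 5 11 (by decide)) (subsetT E 11 11 (by decide))
  · exact kstep E 2 12 4 (baseK2 E) (subsetT E 2 12 (by decide)) (subsetT E 12 4 (by decide))
  · exact kstep E 2 13 4 (baseK2 E) (subsetT E 2 13 (by decide)) (subsetT E 13 4 (by decide))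
  · exact kstep E 0 14 1 (baseK0 E) (subsetT E 0 14 (by decide)) (subsetT E 14 1 (by decide))
  · exact kstep E 5 15 11 (baseK5 E) (subsetT E 5 15 (by decide)) (subsetT E 15 11 (by decide))
  · exact kstep E 0 16 1 (baseK0 E) (subsetT E 0 16 (by decide)) (subsetT E 16 1 (by decide))
  · exact kstep E 5 17 11 (baseK5 E) (subsetT E 5 17 (by decide)) (subsetT E 17 11 (by decide))
  · exact kstep E 0 18 1 (baseK0 E) (subsetT E 0 18 (by decide)) (subsetT E 18 1 (by decide))
  · exact kstep E 2 19 4 (baseK2 E) (subsetT E 2 19 (by decide)) (subsetT E 19 4 (by decide))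
  · exact kstep E 0 20 1 (baseK0 E) (subsetT E 0 20 (by decide)) (subsetT E 20 1 (by decide))
  · exact kstep E 5 21 11 (baseK5 E) (subsetT E 5 21 (by decide)) (subsetT E 21 11 (by decide))
  · exact kstep E 5 22 11 (baseK5 E) (subsetT E 5 22 (by decide)) (subsetT E 22 11 (by decide))
  · exact kstep E 5 23 11 (baseK5 E) (subsetT E 5 23 (by decide)) (subsetT E 23 11 (by decide))
  · exact kstep E 2 24 4 (baseK2 E) (subsetT E 2 24 (by decide)) (subsetT E 24 4 (by decide))
  · exact kstep E 5 25 11 (baseK5 E) (subsetT E 5 25 (by decide)) (subsetT E 25 11 (by decide))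
  · exact kstep E 5 26 11 (baseK5 E) (subsetT E 5 26 (by decide)) (subsetT E 26 11 (by decide))
  · exact kstep E 2 27 4 (baseK2 E) (subsetT E 2 27 (by decide)) (subsetT E 27 4 (by decide))
  · exact kstep E 5 28 11 (baseK5 E) (subsetT E 5 28 (by decide)) (subsetT E 28 11 (by decide))
  · exact kstep E 2 29 4 (baseK2 E) (subsetT E 2 29 (by decide)) (subsetT E 29 4 (by decide))
  · exact kstep E 5 30 11 (baseK5 E) (subsetT E 5 30 (by decide)) (subsetT E 30 11 (by decide))
  · exact kstep E 5 31 11 (baseK5 E) (subsetT E 5 31 (by decide)) (subsetT E 31 11 (by decide))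
  · exact kstep E 5 32 11 (baseK5 E) (subsetT E 5 32 (by decide)) (subsetT E 32 11 (by decide))
  · exact kstep E 5 33 11 (baseK5 E) (subsetT E 5 33 (by decide)) (subsetT E 33 11 (by decide))
  · exact kstep E 5 34 11 (baseK5 E) (subsetT E 5 34 (by decide)) (subsetT E 34 11 (by decide))

theorem interiorEval (E : Set X) (n : Fin 35) :
    interior (evalS E (terms n)) = evalS E (terms (iT n)) := by
  fin_cases n
  · exact istep E 2 0 0 (baseI0 E) (subsetT E 2 0 (by decide)) (subsetT E 0 0 (by decide))
  · exact istep E 3 1 1 (baseI1 E) (subsetT E 3 1 (by decide)) (subsetT E 1 1 (by decide))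
  · exact istep E 2 2 0 (baseI0 E) (subsetT E 2 2 (by decide)) (subsetT E 2 0 (by decide))
  · exact istep E 3 3 1 (baseI1 E) (subsetT E 3 3 (by decide)) (subsetT E 3 1 (by decide))
  · exact istep E 12 4 8 (baseI8 E) (subsetT E 12 4 (by decide)) (subsetT E 4 8 (by decide))
  · exact istep E 2 5 0 (baseI0 E) (subsetT E 2 5 (by decide)) (subsetT E 5 0 (by decide))
  · exact istep E 3 6 1 (baseI1 E) (subsetT E 3 6 (by decide)) (subsetT E 6 1 (by decide))
  · exact istep E 2 7 0 (baseI0 E) (subsetT E 2 7 (by decide)) (subsetT E 7 0 (by decide))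
  · exact istep E 12 8 8 (baseI8 E) (subsetT E 12 8 (by decide)) (subsetT E 8 8 (by decide))
  · exact istep E 12 9 8 (baseI8 E) (subsetT E 12 9 (by decide)) (subsetT E 9 8 (by decide))
  · exact istep E 3 10 1 (baseI1 E) (subsetT E 3 10 (by decide)) (subsetT E 10 1 (by decide))
  · exact istep E 3 11 1 (baseI1 E) (subsetT E 3 11 (by decide)) (subsetT E 11 1 (by decide))
  · exact istep E 12 12 8 (baseI8 E) (subsetT E 12 12 (by decide)) (subsetT E 12 8 (by decide))
  · exact istep E 2 13 0 (baseI0 E) (subsetT E 2 13 (by decide)) (subsetT E 13 0 (by decide))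
  · exact istep E 12 14 8 (baseI8 E) (subsetT E 12 14 (by decide)) (subsetT E 14 8 (by decide))
  · exact istep E 2 15 0 (baseI0 E) (subsetT E 2 15 (by decide)) (subsetT E 15 0 (by decide))
  · exact istep E 3 16 1 (baseI1 E) (subsetT E 3 16 (by decide)) (subsetT E 16 1 (by decide))
  · exact istep E 2 17 0 (baseI0 E) (subsetT E 2 17 (by decide)) (subsetT E 17 0 (by decide))
  · exact istep E 3 18 1 (baseI1 E) (subsetT E 3 18 (by decide)) (subsetT E 18 1 (by decide))
  · exact istep E 2 19 0 (baseI0 E) (subsetT E 2 19 (by decide)) (subsetT E 19 0 (by decide))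
  · exact istep E 12 20 8 (baseI8 E) (subsetT E 12 20 (by decide)) (subsetT E 20 8 (by decide))
  · exact istep E 3 21 1 (baseI1 E) (subsetT E 3 21 (by decide)) (subsetT E 21 1 (by decide))
  · exact istep E 12 22 8 (baseI8 E) (subsetT E 12 22 (by decide)) (subsetT E 22 8 (by decide))
  · exact istep E 12 23 8 (baseI8 E) (subsetT E 12 23 (by decide)) (subsetT E 23 8 (by decide))
  · exact istep E 12 24 8 (baseI8 E) (subsetT E 12 24 (by decide)) (subsetT E 24 8 (by decide))
  · exact istep E 12 25 8 (baseI8 E) (subsetT E 12 25 (by decide)) (subsetT E 25 8 (by decide))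
  · exact istep E 3 26 1 (baseI1 E) (subsetT E 3 26 (by decide)) (subsetT E 26 1 (by decide))
  · exact istep E 12 27 8 (baseI8 E) (subsetT E 12 27 (by decide)) (subsetT E 27 8 (by decide))
  · exact istep E 12 28 8 (baseI8 E) (subsetT E 12 28 (by decide)) (subsetT E 28 8 (by decide))
  · exact istep E 12 29 8 (baseI8 E) (subsetT E 12 29 (by decide)) (subsetT E 29 8 (by decide))
  · exact istep E 3 30 1 (baseI1 E) (subsetT E 3 30 (by decide)) (subsetT E 30 1 (by decide))
  · exact istep E 12 31 8 (baseI8 E) (subsetT E 12 31 (by decide)) (subsetT E 31 8 (by decide))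
  · exact istep E 12 32 8 (baseI8 E) (subsetT E 12 32 (by decide)) (subsetT E 32 8 (by decide))
  · exact istep E 12 33 8 (baseI8 E) (subsetT E 12 33 (by decide)) (subsetT E 33 8 (by decide))
  · exact istep E 12 34 8 (baseI8 E) (subsetT E 12 34 (by decide)) (subsetT E 34 8 (by decide))

end Kur35

/-- The family of subsets of a topological space `X` generated from `E` by successive
applications of topological closure, interior, binary intersection, and binary union:
`kiwvGen E` is the smallest collection of subsets of `X` containing `E` and closed under
these operations. -/
inductive kiwvGen {X : Type*} [TopologicalSpace X] (E : Set X) : Set X → Prop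
  | base : kiwvGen E E
  | closure {A : Set X} : kiwvGen E A → kiwvGen E (closure A)
  | interior {A : Set X} : kiwvGen E A → kiwvGen E (interior A)
  | inter {A B : Set X} : kiwvGen E A → kiwvGen E B → kiwvGen E (A ∩ B)
  | union {A B : Set X} : kiwvGen E A → kiwvGen E B → kiwvGen E (A ∪ B)

/-- The smallest family of subsets of `X` containing `E` and closed under closure, interior,
binary intersection, and binary union has at most 35 elements. -/
theorem kuratowski_thirtyfive {X : Type*} [TopologicalSpace X] (E : Set X) :
    {A : Set X | kiwvGen E A}.encard ≤ 35 := by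
  have key : ∀ A, kiwvGen E A → ∃ n : Fin 35, A = Kur35.evalS E (Kur35.terms n) := by
    intro A h
    induction h with
    | base => exact ⟨0, rfl⟩
    | closure _ ih =>
      obtain ⟨n, rfl⟩ := ih
      exact ⟨Kur35.kT n, Kur35.closureEval E n⟩
    | interior _ ih =>
      obtain ⟨n, rfl⟩ := ih
      exact ⟨Kur35.iT n, Kur35.interiorEval E n⟩
    | inter _ _ ih1 ih2 =>
      obtain ⟨a, rfl⟩ := ih1
      obtain ⟨b, rfl⟩ := ih2
      exact ⟨Kur35.aT a b, (Kur35.interEval E a b).symm⟩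
    | union _ _ ih1 ih2 =>
      obtain ⟨a, rfl⟩ := ih1
      obtain ⟨b, rfl⟩ := ih2
      exact ⟨Kur35.oT a b, (Kur35.orEval E a b).symm⟩
  have hsub : {A : Set X | kiwvGen E A} ⊆
      Set.range (fun n : Fin 35 => Kur35.evalS E (Kur35.terms n)) := by
    intro A hA
    obtain ⟨n, rfl⟩ := key A hA
    exact ⟨n, rfl⟩
  refine le_trans (Set.encard_mono hsub) ?_
  rw [← Set.image_univ]
  refine le_trans (Set.encard_image_le _ _) ?_
  rw [Set.encard_univ]
  simp
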